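/- Let ω be a majorant, M > 0, and let G be a proper subdomain of the plane. Let f be a real harmonic function in G that extends continuously to ∂G and suppose | |f(z)| − |f(w)| | ≤ M ω(|z−w|) for all z, w ∈ G ∪ ∂G. Then the gradient of f satisfies |∇f(z)| ≤ (40 M / π) · ω(d_G(z)) / d_G(z) for every z ∈ G. -/

import Mathlib

open MeasureTheory Metric Set Real
open scoped ENNReal

/-- A real-valued function on `ℂ ≅ ℝ²` is harmonic on a set: it is `C²` there and
its Laplacian `u_xx + u_yy` vanishes. -/
def IsHarmonicOnR (u : ℂ → ℝ) (s : Set ℂ) : Prop :=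
  ContDiffOn ℝ 2 u s ∧ ∀ z ∈ s,
    fderiv ℝ (fun w => fderiv ℝ u w 1) z 1
      + fderiv ℝ (fun w => fderiv ℝ u w Complex.I) z Complex.I = 0

/-- `|∇u(z)|`: the Euclidean norm of the gradient `(u_x, u_y)` of a real-valued
function `u` on `ℂ ≅ ℝ²`. -/
noncomputable def gradNorm (u : ℂ → ℝ) (z : ℂ) : ℝ :=
  Real.sqrt ((fderiv ℝ u z 1) ^ 2 + (fderiv ℝ u z Complex.I) ^ 2)

/-- A majorant: a continuous increasing function `ω : [0,∞) → [0,∞)` with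
`ω 0 = 0` such that `ω t / t` is non-increasing for `t > 0`. -/
def IsMajorant (ω : ℝ → ℝ) : Prop :=
  ContinuousOn ω (Ici 0) ∧ MonotoneOn ω (Ici 0) ∧ ω 0 = 0 ∧
    ∀ s t : ℝ, 0 < s → s ≤ t → ω t / t ≤ ω s / s

noncomputable def gfun (f : ℂ → ℝ) : ℂ → ℂ :=
  fun z => (fderiv ℝ f z 1 : ℂ) - Complex.I * (fderiv ℝ f z Complex.I)

lemma fderiv_apply_re (f : ℂ → ℝ) (w v : ℂ) :
    (fderiv ℝ f w) v = (gfun f w * v).re := by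
  have h1 : v = v.re • (1:ℂ) + v.im • Complex.I := by
    simp only [Complex.real_smul, mul_one]
    exact (Complex.re_add_im v).symm
  conv_lhs => rw [h1]
  rw [_root_.map_add, (fderiv ℝ f w).map_smul, (fderiv ℝ f w).map_smul]
  simp [gfun, Complex.mul_re, smul_eq_mul]
  ring

lemma gfun_differentiableAt {G : Set ℂ} (hGopen : IsOpen G) {f : ℂ → ℝ}
    (hf : IsHarmonicOnR f G) {w : ℂ} (hw : w ∈ G) :
    DifferentiableAt ℂ (gfun f) w := by
  have hmem : G ∈ nhds w := hGopen.mem_nhds hw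
  have h2 : ContDiffAt ℝ 2 f w := hf.1.contDiffAt hmem
  have h1 : ContDiffAt ℝ 1 (fderiv ℝ f) w := h2.fderiv_right (by norm_num)
  have hdA : HasFDerivAt (fderiv ℝ f) (fderiv ℝ (fderiv ℝ f) w) w :=
    (h1.differentiableAt (by norm_num)).hasFDerivAt
  set A := fderiv ℝ (fderiv ℝ f) w with hAdef
  have hev : ∀ᶠ y in nhds w, HasFDerivAt f (fderiv ℝ f y) y := by
    filter_upwards [hmem] with y hy
    exact ((hf.1.contDiffAt (hGopen.mem_nhds hy)).differentiableAt (by norm_num)).hasFDerivAt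
  have hsym : A Complex.I 1 = A 1 Complex.I :=
    second_derivative_symmetric_of_eventually_of_real hev hdA Complex.I 1
  have hx1 : HasFDerivAt (fun y => fderiv ℝ f y (1:ℂ))
      ((ContinuousLinearMap.apply ℝ ℝ (1:ℂ)).comp A) w :=
    (ContinuousLinearMap.apply ℝ ℝ (1:ℂ)).hasFDerivAt.comp w hdA
  have hxI : HasFDerivAt (fun y => fderiv ℝ f y Complex.I)
      ((ContinuousLinearMap.apply ℝ ℝ Complex.I).comp A) w :=
    (ContinuousLinearMap.apply ℝ ℝ Complex.I).hasFDerivAt.comp w hdA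
  have harm : A 1 1 + A Complex.I Complex.I = 0 := by
    have h0 := hf.2 w hw
    rw [hx1.fderiv, hxI.fderiv] at h0
    simpa using h0
  set L : ℂ →L[ℝ] ℂ :=
    (Complex.ofRealCLM.comp ((ContinuousLinearMap.apply ℝ ℝ (1:ℂ)).comp A)) -
      (Complex.I • (Complex.ofRealCLM.comp ((ContinuousLinearMap.apply ℝ ℝ Complex.I).comp A)))
    with hLdef
  have hL : HasFDerivAt (gfun f) L w := by
    have hgx : HasFDerivAt (fun y => ((fderiv ℝ f y (1:ℂ) : ℝ) : ℂ))
        (Complex.ofRealCLM.comp ((ContinuousLinearMap.apply ℝ ℝ (1:ℂ)).comp A)) w :=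
      Complex.ofRealCLM.hasFDerivAt.comp w hx1
    have hgy : HasFDerivAt (fun y => Complex.I * ((fderiv ℝ f y Complex.I : ℝ) : ℂ))
        (Complex.I • (Complex.ofRealCLM.comp ((ContinuousLinearMap.apply ℝ ℝ Complex.I).comp A))) w :=
      (Complex.ofRealCLM.hasFDerivAt.comp w hxI).const_mul Complex.I
    exact hgx.sub hgy
  have hL1 : ∀ v : ℂ, L v = ((A v 1 : ℝ) : ℂ) - Complex.I * ((A v Complex.I : ℝ) : ℂ) := by
    intro v; simp [hLdef]
  have key : L Complex.I = Complex.I * L 1 := by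
    rw [hL1, hL1]
    apply Complex.ext
    · simp [hsym]
    · simp; linarith [harm]
  set L' : ℂ →L[ℂ] ℂ := (ContinuousLinearMap.id ℂ ℂ).smulRight (L 1) with hL'def
  have hres : L'.restrictScalars ℝ = L := by
    apply ContinuousLinearMap.ext
    intro v
    have h1 : v = v.re • (1:ℂ) + v.im • Complex.I := by
      simp only [Complex.real_smul, mul_one]
      exact (Complex.re_add_im v).symm
    have h2 : (L'.restrictScalars ℝ) v = v * L 1 := by
      simp [hL'def, smul_eq_mul]
    rw [h2]
    conv_rhs => rw [h1]
    rw [_root_.map_add, L.map_smul, L.map_smul, key]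
    simp only [Complex.real_smul]
    conv_lhs => rw [← Complex.re_add_im v]
    ring
  exact (hasFDerivAt_of_restrictScalars ℝ hL hres).differentiableAt

lemma interval_integral_conj {a b : ℝ} (h : ℝ → ℂ) :
    (∫ θ in a..b, (starRingEnd ℂ) (h θ)) = (starRingEnd ℂ) (∫ θ in a..b, h θ) := by
  rw [intervalIntegral.intervalIntegral_eq_integral_uIoc,
    intervalIntegral.intervalIntegral_eq_integral_uIoc, integral_conj]
  split_ifs <;> simp [Complex.real_smul, map_mul, Complex.conj_ofReal]

lemma key_estimate {G : Set ℂ} (hGopen : IsOpen G) {f : ℂ → ℝ} (hf : IsHarmonicOnR f G)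
    {z : ℂ} {ρ : ℝ} (hρ : 0 < ρ) (hball : closedBall z ρ ⊆ G) {c K : ℝ}
    (hbd : ∀ w ∈ sphere z ρ, |f w - c| ≤ K) :
    ‖gfun f z‖ * (π * ρ) ≤ K * (2 * π) := by
  have hdiff : ∀ w ∈ closedBall z ρ, DifferentiableAt ℂ (gfun f) w := fun w hw =>
    gfun_differentiableAt hGopen hf (hball hw)
  have hgcont : ContinuousOn (gfun f) (closedBall z ρ) := fun w hw =>
    ((hdiff w hw).continuousAt).continuousWithinAt
  have hwmem : ∀ θ : ℝ, circleMap z ρ θ ∈ closedBall z ρ := circleMap_mem_closedBall z hρ.le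
  have hfd : ∀ θ : ℝ, DifferentiableAt ℝ f (circleMap z ρ θ) := fun θ =>
    ((hf.1.contDiffAt (hGopen.mem_nhds (hball (hwmem θ)))).differentiableAt (by norm_num))
  -- mean value property for gfun
  have hmvp : (∫ θ in (0:ℝ)..2*π, gfun f (circleMap z ρ θ)) = ((2*π : ℝ) : ℂ) * gfun f z := by
    have ha : (∮ ζ in C(z, ρ), (ζ - z)⁻¹ • gfun f ζ) = (2 * π * Complex.I) • gfun f z :=
      DifferentiableOn.circleIntegral_sub_inv_smul
        (fun w hw => (hdiff w hw).differentiableWithinAt) (mem_ball_self hρ)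
    have e1 : (∮ ζ in C(z, ρ), (ζ - z)⁻¹ • gfun f ζ)
        = Complex.I * ∫ θ in (0:ℝ)..2*π, gfun f (circleMap z ρ θ) := by
      simp only [circleIntegral, deriv_circleMap, circleMap_sub_center, smul_eq_mul]
      rw [← intervalIntegral.integral_const_mul]
      refine intervalIntegral.integral_congr fun θ _ => ?_
      have hne : circleMap 0 ρ θ ≠ 0 := by
        simpa using circleMap_ne_center (c := 0) hρ.ne' (θ := θ)
      field_simp
    rw [e1, smul_eq_mul] at ha
    apply mul_left_cancel₀ Complex.I_ne_zero
    rw [ha]; push_cast; ring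
  -- Cauchy-Goursat for (ζ - z) * gfun f ζ
  have hzero : (∫ θ in (0:ℝ)..2*π, (circleMap 0 ρ θ)^2 * gfun f (circleMap z ρ θ)) = 0 := by
    have hb : (∮ ζ in C(z, ρ), (ζ - z) * gfun f ζ) = 0 := by
      apply Complex.circleIntegral_eq_zero_of_differentiable_on_off_countable hρ.le
        countable_empty ((continuousOn_id.sub continuousOn_const).mul hgcont)
      intro w hw
      exact (differentiableAt_id.sub_const z).mul (hdiff w (ball_subset_closedBall hw.1))
    have e1 : (∮ ζ in C(z, ρ), (ζ - z) * gfun f ζ)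
        = Complex.I * ∫ θ in (0:ℝ)..2*π, (circleMap 0 ρ θ)^2 * gfun f (circleMap z ρ θ) := by
      simp only [circleIntegral, deriv_circleMap, circleMap_sub_center, smul_eq_mul]
      rw [← intervalIntegral.integral_const_mul]
      exact intervalIntegral.integral_congr fun θ _ => by ring
    rw [e1] at hb
    exact (mul_eq_zero.mp hb).resolve_left Complex.I_ne_zero
  -- abbreviations
  set w : ℝ → ℂ := circleMap z ρ with hwdef
  set m : ℝ → ℂ := circleMap 0 ρ with hmdef
  set E : ℝ → ℂ := fun θ => Complex.exp (-(θ:ℂ) * Complex.I) with hEdef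
  have hE : ∀ θ : ℝ, HasDerivAt E (-Complex.I * E θ) θ := by
    intro θ
    have h1 : HasDerivAt (fun θ:ℝ => -(θ:ℂ) * Complex.I) (-Complex.I) θ := by
      simpa [Pi.neg_def] using ((Complex.ofRealCLM.hasDerivAt (x := θ)).mul_const Complex.I).neg
    simpa [hEdef, mul_comm] using h1.cexp
  have hv : ∀ θ : ℝ, HasDerivAt (fun θ => Complex.I * E θ) (E θ) θ := by
    intro θ
    have := (hE θ).const_mul Complex.I
    simpa [← mul_assoc, Complex.I_mul_I] using this
  have hu : ∀ θ : ℝ, HasDerivAt (fun θ => ((f (w θ) : ℝ) : ℂ))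
      (((gfun f (w θ) * (m θ * Complex.I)).re : ℝ) : ℂ) θ := by
    intro θ
    have h1 : HasDerivAt w (m θ * Complex.I) θ := hasDerivAt_circleMap z ρ θ
    have h2 : HasDerivAt (fun θ => f (w θ)) (fderiv ℝ f (w θ) (m θ * Complex.I)) θ :=
      (hfd θ).hasFDerivAt.comp_hasDerivAt θ h1
    have h3 := Complex.ofRealCLM.hasFDerivAt.comp_hasDerivAt θ h2
    rw [fderiv_apply_re] at h3
    simpa [Function.comp_def] using h3
  -- continuity facts
  have hcw : Continuous w := continuous_circleMap z ρ
  have hgw : Continuous fun θ => gfun f (w θ) := hgcont.comp_continuous hcw hwmem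
  have hfw : Continuous fun θ => f (w θ) :=
    ((hf.1.continuousOn).mono hball).comp_continuous hcw hwmem
  have hmcont : Continuous m := continuous_circleMap 0 ρ
  have hEcont : Continuous E := by
    apply Continuous.cexp
    exact (Complex.continuous_ofReal.neg).mul continuous_const
  have hu'cont : Continuous fun θ => (((gfun f (w θ) * (m θ * Complex.I)).re : ℝ) : ℂ) :=
    Complex.continuous_ofReal.comp
      (Complex.continuous_re.comp (hgw.mul (hmcont.mul continuous_const)))
  -- boundary values
  have hper : w (2*π) = w 0 := by
    have := (periodic_circleMap z ρ) 0
    simpa [hwdef] using this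
  have hE2π : E (2*π) = 1 := by
    rw [hEdef]
    simp only []
    rw [show (-(((2:ℝ)*π : ℝ):ℂ) * Complex.I) = -(2*(π:ℂ)*Complex.I) by push_cast; ring,
      Complex.exp_neg, Complex.exp_two_pi_mul_I, inv_one]
  have hE0 : E 0 = 1 := by simp [hEdef]
  -- integration by parts
  have hbp : (∫ θ in (0:ℝ)..2*π, ((f (w θ) : ℝ) : ℂ) * E θ)
      = -(∫ θ in (0:ℝ)..2*π,
          ((((gfun f (w θ) * (m θ * Complex.I)).re : ℝ) : ℂ) * (Complex.I * E θ))) := by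
    have h := intervalIntegral.integral_mul_deriv_eq_deriv_mul
      (u := fun θ => ((f (w θ) : ℝ) : ℂ))
      (u' := fun θ => (((gfun f (w θ) * (m θ * Complex.I)).re : ℝ) : ℂ))
      (v := fun θ => Complex.I * E θ) (v' := E) (a := 0) (b := 2*π)
      (fun θ _ => hu θ) (fun θ _ => hv θ)
      (hu'cont.intervalIntegrable 0 (2*π)) (hEcont.intervalIntegrable 0 (2*π))
    rw [h]
    simp only [hper, hE2π, hE0]
    ring
  -- pointwise identity for the integrand
  have hpoint : ∀ θ ∈ uIcc (0:ℝ) (2*π),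
      ((((gfun f (w θ) * (m θ * Complex.I)).re : ℝ) : ℂ) * (Complex.I * E θ))
        = (-(ρ:ℂ)/2) * gfun f (w θ)
          + (1/(2*(ρ:ℂ))) * (starRingEnd ℂ) ((m θ)^2 * gfun f (w θ)) := by
    intro θ _
    set g := gfun f (w θ)
    have hre : ∀ ζ : ℂ, ((ζ.re : ℝ) : ℂ) = (ζ + (starRingEnd ℂ) ζ)/2 := by
      intro ζ; rw [Complex.add_conj]; push_cast; ring
    have hXne : Complex.exp ((θ:ℂ) * Complex.I) ≠ 0 := Complex.exp_ne_zero _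
    have hEX : E θ = (Complex.exp ((θ:ℂ) * Complex.I))⁻¹ := by
      rw [hEdef]
      simp only []
      rw [show (-(θ:ℂ) * Complex.I) = -((θ:ℂ) * Complex.I) by ring, Complex.exp_neg]
    have hm : m θ = (ρ:ℂ) * Complex.exp ((θ:ℂ) * Complex.I) := by
      rw [hmdef]; exact circleMap_zero ρ θ
    have hmE : m θ * E θ = (ρ:ℂ) := by
      rw [hm, hEX]; field_simp
    have hconjm : (starRingEnd ℂ) (m θ) = (ρ:ℂ) * E θ := by
      rw [hm, hEX, map_mul, Complex.conj_ofReal, ← Complex.exp_conj, map_mul,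
        Complex.conj_ofReal, Complex.conj_I,
        show ((θ:ℂ) * -Complex.I) = -((θ:ℂ) * Complex.I) by ring, Complex.exp_neg]
    have expand : ((g * (m θ * Complex.I) + (starRingEnd ℂ) (g * (m θ * Complex.I)))/2)
          * (Complex.I * E θ)
        = (g * (m θ * E θ)) * (Complex.I * Complex.I) / 2
          + ((starRingEnd ℂ) g * ((starRingEnd ℂ) (m θ) * E θ)) * (-(Complex.I * Complex.I))/2 := by
      simp only [map_mul, Complex.conj_I]
      ring
    rw [hre, expand, hmE, hconjm, Complex.I_mul_I]
    have hconj2 : (starRingEnd ℂ) ((m θ)^2 * g) = ((ρ:ℂ) * E θ)^2 * (starRingEnd ℂ) g := by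
      rw [map_mul, map_pow, hconjm]
    rw [hconj2]
    have hρc : (ρ:ℂ) ≠ 0 := Complex.ofReal_ne_zero.mpr hρ.ne'
    field_simp
  -- the main identity
  have hJ : (∫ θ in (0:ℝ)..2*π, ((f (w θ) : ℝ) : ℂ) * E θ)
      = (π:ℂ) * (ρ:ℂ) * gfun f z := by
    have hint1 : IntervalIntegrable (fun θ => (-(ρ:ℂ)/2) * gfun f (w θ)) volume 0 (2*π) :=
      (continuous_const.mul hgw).intervalIntegrable _ _
    have hint2 : IntervalIntegrable
        (fun θ => (1/(2*(ρ:ℂ))) * (starRingEnd ℂ) ((m θ)^2 * gfun f (w θ))) volume 0 (2*π) := by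
      apply Continuous.intervalIntegrable
      exact continuous_const.mul (Complex.continuous_conj.comp ((hmcont.pow 2).mul hgw))
    rw [hbp, intervalIntegral.integral_congr hpoint,
      intervalIntegral.integral_add hint1 hint2,
      intervalIntegral.integral_const_mul, intervalIntegral.integral_const_mul,
      interval_integral_conj, hzero, map_zero, mul_zero, add_zero, hmvp]
    push_cast
    ring
  -- integral of E vanishes
  have hEint : (∫ θ in (0:ℝ)..2*π, E θ) = 0 := by
    rw [intervalIntegral.integral_eq_sub_of_hasDerivAt (fun θ _ => hv θ)
      (hEcont.intervalIntegrable _ _)]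
    simp only [hE2π, hE0]
    ring
  -- subtract the constant c
  have hJc : (∫ θ in (0:ℝ)..2*π, ((f (w θ) - c : ℝ) : ℂ) * E θ)
      = (π:ℂ) * (ρ:ℂ) * gfun f z := by
    have hcong : ∀ θ ∈ uIcc (0:ℝ) (2*π), ((f (w θ) - c : ℝ) : ℂ) * E θ
        = ((f (w θ) : ℝ) : ℂ) * E θ - (c:ℂ) * E θ := by
      intro θ _; push_cast; ring
    have hint1 : IntervalIntegrable (fun θ => ((f (w θ) : ℝ) : ℂ) * E θ) volume 0 (2*π) := by
      apply Continuous.intervalIntegrable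
      exact (Complex.continuous_ofReal.comp hfw).mul hEcont
    have hint2 : IntervalIntegrable (fun θ => (c:ℂ) * E θ) volume 0 (2*π) :=
      (continuous_const.mul hEcont).intervalIntegrable _ _
    rw [intervalIntegral.integral_congr hcong,
      intervalIntegral.integral_sub hint1 hint2,
      intervalIntegral.integral_const_mul, hEint, hJ]
    ring
  -- norm estimate
  have hnorm : ‖∫ θ in (0:ℝ)..2*π, ((f (w θ) - c : ℝ) : ℂ) * E θ‖ ≤ K * |2*π - 0| := by
    apply intervalIntegral.norm_integral_le_of_norm_le_const
    intro θ hθ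
    have hsph : w θ ∈ sphere z ρ := circleMap_mem_sphere z hρ.le θ
    have hEnorm : ‖E θ‖ = 1 := by
      simp [hEdef, Complex.norm_exp]
    rw [norm_mul, hEnorm, mul_one, Complex.norm_real, Real.norm_eq_abs]
    exact hbd _ hsph
  rw [hJc] at hnorm
  have h1 : ‖(π:ℂ) * (ρ:ℂ) * gfun f z‖ = π * ρ * ‖gfun f z‖ := by
    simp [map_mul, Complex.norm_real,
      abs_of_pos Real.pi_pos, abs_of_pos hρ]
  rw [h1, abs_of_nonneg (by rw [sub_zero]; positivity : (0:ℝ) ≤ 2*π - 0)] at hnorm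
  calc ‖gfun f z‖ * (π * ρ) = π * ρ * ‖gfun f z‖ := by ring
  _ ≤ K * (2*π - 0) := hnorm
  _ = K * (2*π) := by ring

/-- let `ω` be a majorant, `M > 0`, `G` a proper subdomain of the
plane, and `f` a real harmonic function in `G`, continuous up to `∂G`, with
`| |f(z)| - |f(w)| | ≤ M ω(|z-w|)` for all `z, w ∈ G ∪ ∂G`. Then
`|∇f(z)| ≤ (40M/π) ω(d_G(z))/d_G(z)` for every `z ∈ G`. -/
theorem stmt5 (ω : ℝ → ℝ) (hω : IsMajorant ω) (M : ℝ) (hM : 0 < M)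
    (G : Set ℂ) (hGopen : IsOpen G) (hGconn : IsConnected G) (hGproper : G ≠ univ)
    (f : ℂ → ℝ) (hf : IsHarmonicOnR f G) (hfc : ContinuousOn f (closure G))
    (hlip : ∀ z ∈ G ∪ frontier G, ∀ w ∈ G ∪ frontier G,
      abs (|f z| - |f w|) ≤ M * ω (dist z w)) :
    ∀ z ∈ G, gradNorm f z ≤
      (40 * M / Real.pi) * (ω (infDist z (frontier G)) / infDist z (frontier G)) := by
  intro z hz
  set d := infDist z (frontier G) with hddef
  -- the frontier is nonempty and z is at positive distance from it
  have hfr_ne : (frontier G).Nonempty := by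
    rcases eq_empty_or_nonempty (frontier G) with h | h
    · exfalso
      rcases frontier_eq_empty_iff.mp h with h1 | h1
      · exact hGconn.nonempty.ne_empty h1
      · exact hGproper h1
    · exact h
  have hzfr : z ∉ frontier G := by
    rw [hGopen.frontier_eq]
    exact fun h => h.2 hz
  have hd : 0 < d := by
    rw [hddef, ← IsClosed.notMem_iff_infDist_pos isClosed_frontier hfr_ne]
    exact hzfr
  -- the closed ball of radius d/2 is inside G
  have hball : closedBall z (d/2) ⊆ G := by
    obtain ⟨y, hy, hyd⟩ := exists_mem_frontier_infDist_compl_eq_dist hz hGproper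
    have h1 : d ≤ infDist z Gᶜ := by
      rw [hyd, hddef]
      exact infDist_le_dist_of_mem hy
    intro w hw
    apply ball_infDist_compl_subset (x := z) (s := G)
    rw [mem_ball]
    calc dist w z ≤ d/2 := mem_closedBall.mp hw
    _ < d := by linarith
    _ ≤ _ := h1
  have hρ : 0 < d/2 := by linarith
  have hωd : 0 ≤ ω d := by
    have := hω.2.1 (self_mem_Ici) (mem_Ici.mpr hd.le) hd.le
    rw [hω.2.2.1] at this
    exact this
  -- bound |f - c| on the sphere for a suitable constant c
  obtain ⟨c, hc⟩ : ∃ c : ℝ, ∀ w ∈ sphere z (d/2), |f w - c| ≤ M * ω d := by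
    by_cases hzero : ∃ w₀ ∈ closedBall z (d/2), f w₀ = 0
    · obtain ⟨w₀, hw₀, hfw₀⟩ := hzero
      refine ⟨0, fun w hw => ?_⟩
      have hwG : w ∈ G := hball (sphere_subset_closedBall hw)
      have h1 := hlip w (Or.inl hwG) w₀ (Or.inl (hball hw₀))
      rw [hfw₀, abs_zero, sub_zero, abs_abs] at h1
      have h2 : dist w w₀ ≤ d := by
        calc dist w w₀ ≤ dist w z + dist z w₀ := dist_triangle w z w₀
        _ ≤ d/2 + d/2 := by
            gcongr
            · exact le_of_eq (mem_sphere.mp hw)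
            · rw [dist_comm]; exact mem_closedBall.mp hw₀
        _ = d := by ring
      have h3 : ω (dist w w₀) ≤ ω d :=
        hω.2.1 (mem_Ici.mpr dist_nonneg) (mem_Ici.mpr hd.le) h2
      rw [sub_zero]
      calc |f w| ≤ M * ω (dist w w₀) := h1
      _ ≤ M * ω d := by gcongr
    · push_neg at hzero
      refine ⟨f z, fun w hw => ?_⟩
      have hzball : z ∈ closedBall z (d/2) := mem_closedBall_self hρ.le
      have hwball : w ∈ closedBall z (d/2) := sphere_subset_closedBall hw
      have hcont : ContinuousOn f (closedBall z (d/2)) := (hf.1.continuousOn).mono hball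
      have hsign : ∀ w' ∈ closedBall z (d/2), 0 < f w' * f z := by
        intro w' hw'
        rcases lt_or_ge 0 (f w' * f z) with h | h
        · exact h
        · exfalso
          have hpre := (convex_closedBall z (d/2)).isPreconnected
          rcases mul_nonpos_iff.mp h with ⟨h1, h2⟩ | ⟨h1, h2⟩
          · obtain ⟨w₀, hw₀, h0⟩ := hpre.intermediate_value hzball hw' hcont
              (mem_Icc.mpr ⟨h2, h1⟩ : (0:ℝ) ∈ Icc (f z) (f w'))
            exact hzero w₀ hw₀ h0
          · obtain ⟨w₀, hw₀, h0⟩ := hpre.intermediate_value hw' hzball hcont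
              (mem_Icc.mpr ⟨h1, h2⟩ : (0:ℝ) ∈ Icc (f w') (f z))
            exact hzero w₀ hw₀ h0
      have h1 := hlip w (Or.inl (hball hwball)) z (Or.inl hz)
      have heq : |f w - f z| = |(|f w| - |f z|)| := by
        rcases mul_pos_iff.mp (hsign w hwball) with ⟨hw1, hz1⟩ | ⟨hw1, hz1⟩
        · rw [abs_of_pos hw1, abs_of_pos hz1]
        · rw [abs_of_neg hw1, abs_of_neg hz1, ← abs_neg]
          congr 1; ring
      have hdist : dist w z = d/2 := mem_sphere.mp hw
      have h3 : ω (dist w z) ≤ ω d := by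
        rw [hdist]
        exact hω.2.1 (mem_Ici.mpr hρ.le) (mem_Ici.mpr hd.le) (by linarith)
      rw [heq]
      calc |(|f w| - |f z|)| ≤ M * ω (dist w z) := h1
      _ ≤ M * ω d := by gcongr
  -- apply the key estimate
  have hK := key_estimate hGopen hf hρ hball hc
  have hgn : gradNorm f z = ‖gfun f z‖ := by
    rw [gradNorm, Complex.norm_def, Complex.normSq_apply]
    congr 1
    simp [gfun]
    ring
  rw [hgn]
  have h2 : ‖gfun f z‖ * d ≤ 4 * (M * ω d) := by
    nlinarith [Real.pi_pos, hK]
  rw [div_mul_div_comm, le_div_iff₀ (by positivity : (0:ℝ) < π * d)]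
  nlinarith [mul_le_mul_of_nonneg_left h2 Real.pi_pos.le, Real.pi_le_four,
    mul_nonneg hM.le hωd, Real.pi_pos]
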